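/- For every x ≥ 1 one has Ψ(x) < (1/2)(q + 1/q)·β·(ln B)·B^{−β(x−1)}. -/
import Mathlib


open MeasureTheory Real Filter

noncomputable def nu (B q β x : ℝ) : ℝ := 1 / (1 + q * B ^ (-(β * x)))

noncomputable def G (B q β x : ℝ) : ℝ := (nu B q β (x + 1) - nu B q β (x - 1)) / 2

noncomputable def Psi (B q β x : ℝ) : ℝ := (G B q β x + G B (1 / q) β x) / 2

noncomputable def modCont (f : ℝ → ℝ) (θ : ℝ) : ℝ :=
  sSup {d : ℝ | ∃ x y : ℝ, |x - y| ≤ θ ∧ d = |f x - f y|}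

noncomputable def supNorm (f : ℝ → ℝ) : ℝ := ⨆ x : ℝ, |f x|

noncomputable def opA (B q β : ℝ) (n : ℕ) (f : ℝ → ℝ) (x : ℝ) : ℝ :=
  ∫ v : ℝ, f (v / n) * Psi B q β (n * x - v)

noncomputable def opAStar (B q β : ℝ) (n : ℕ) (f : ℝ → ℝ) (x : ℝ) : ℝ :=
  (n : ℝ) * ∫ v : ℝ, (∫ h in (v / n)..((v + 1) / n), f h) * Psi B q β (n * x - v)

noncomputable def opABar (B q β : ℝ) (r : ℕ) (w : ℕ → ℝ) (n : ℕ) (f : ℝ → ℝ) (x : ℝ) : ℝ :=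
  ∫ v : ℝ, (∑ s ∈ Finset.Icc 1 r, w s * f (v / n + (s : ℝ) / ((n : ℝ) * (r : ℝ)))) *
    Psi B q β (n * x - v)

lemma G_lt_bound (B q β x : ℝ) (hB : 1 < B) (hq : 0 < q) (hβ : 0 < β) :
    G B q β x < q * β * Real.log B * B ^ (-(β * (x - 1))) := by
  have hB0 : (0:ℝ) < B := lt_trans one_pos hB
  have hL : 0 < Real.log B := Real.log_pos hB
  set C := B ^ (-(β * (x - 1))) with hC
  set A := B ^ (-(β * (x + 1))) with hA
  have hCpos : 0 < C := Real.rpow_pos_of_pos hB0 _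
  have hApos : 0 < A := Real.rpow_pos_of_pos hB0 _
  have hAC : A = C * B ^ (-(2 * β)) := by
    rw [hA, hC, ← Real.rpow_add hB0]; ring_nf
  have hexp : 1 - 2 * β * Real.log B < B ^ (-(2 * β)) := by
    have h := Real.add_one_lt_exp (x := -(2 * β * Real.log B)) (by nlinarith)
    rw [Real.rpow_def_of_pos hB0, show Real.log B * -(2 * β) = -(2 * β * Real.log B) by ring]
    linarith
  have hlt1 : B ^ (-(2 * β)) < 1 := by
    apply Real.rpow_lt_one_of_one_lt_of_neg hB (by linarith)
  have hCA : 0 < C - A := by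
    rw [hAC]; nlinarith
  have hCA2 : C - A < C * (2 * β * Real.log B) := by
    rw [hAC]; nlinarith
  have h1 : (1:ℝ) < 1 + q * A := by nlinarith
  have h2 : (1:ℝ) < 1 + q * C := by nlinarith
  have hdiff : nu B q β (x + 1) - nu B q β (x - 1)
      = q * (C - A) / ((1 + q * A) * (1 + q * C)) := by
    simp only [nu, ← hA, ← hC]
    field_simp
    ring
  have hstep : q * (C - A) / ((1 + q * A) * (1 + q * C)) < q * (C - A) := by
    apply div_lt_self (by positivity)
    nlinarith
  have : nu B q β (x + 1) - nu B q β (x - 1) < 2 * (q * β * Real.log B * C) := by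
    rw [hdiff]
    nlinarith
  simp only [G]
  linarith

/-- pointwise exponential bound for `Ψ` on `[1, ∞)`. -/
theorem Psi_lt_exponential_bound (B q β : ℝ) (hB : 1 < B) (hq : 0 < q) (hβ : 0 < β) :
    ∀ x : ℝ, 1 ≤ x →
      Psi B q β x < (1 / 2) * (q + 1 / q) * β * Real.log B * B ^ (-(β * (x - 1))) := by
  intro x _
  have h1 := G_lt_bound B q β x hB hq hβ
  have h2 := G_lt_bound B (1/q) β x hB (by positivity) hβ
  simp only [Psi]
  have hCpos : (0:ℝ) < B ^ (-(β * (x - 1))) := Real.rpow_pos_of_pos (lt_trans one_pos hB) _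
  nlinarith [Real.log_pos hB]
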